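/- Let ρ be a convex risk measure on X, let γ_A, γ_B > 0 and γ_C = γ_A + γ_B, and for γ > 0 let ρ_γ(Ψ) = γ·ρ(Ψ/γ). Then the γ-tolerant risk measures satisfy the semigroup property under inf-convolution, and the inf-convolution is exact at F* = (γ_B/γ_C)·Ψ: for every Ψ ∈ X, inf_{F∈X} { ρ_{γ_A}(Ψ − F) + ρ_{γ_B}(F) } = ρ_{γ_C}(Ψ) = ρ_{γ_A}(Ψ − F*) + ρ_{γ_B}(F*). -/

import Mathlib

open BoundedContinuousFunction

/-- A (monetary) convex risk measure on the space `Ω →ᵇ ℝ` of bounded functions on `Ω`. -/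
def IsConvexRiskMeasure {Ω : Type*} [TopologicalSpace Ω] (ρ : (Ω →ᵇ ℝ) → ℝ) : Prop :=
  (∀ (Φ Ψ : Ω →ᵇ ℝ) (l : ℝ), 0 ≤ l → l ≤ 1 →
      ρ (l • Φ + (1 - l) • Ψ) ≤ l * ρ Φ + (1 - l) * ρ Ψ) ∧
  (∀ Φ Ψ : Ω →ᵇ ℝ, (∀ ω, Φ ω ≤ Ψ ω) → ρ Ψ ≤ ρ Φ) ∧
  (∀ (Φ : Ω →ᵇ ℝ) (m : ℝ), ρ (Φ + BoundedContinuousFunction.const Ω m) = ρ Φ - m)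

/-- The `γ`-tolerant (dilated) risk measure `ρ_γ(Ψ) = γ ρ(Ψ/γ)`. -/
noncomputable def dilated {Ω : Type*} [TopologicalSpace Ω]
    (ρ : (Ω →ᵇ ℝ) → ℝ) (γ : ℝ) (Ψ : Ω →ᵇ ℝ) : ℝ :=
  γ * ρ (γ⁻¹ • Ψ)

lemma dilated_lb {Ω : Type*} [TopologicalSpace Ω]
    (ρ : (Ω →ᵇ ℝ) → ℝ) (hρ : IsConvexRiskMeasure ρ)
    (γA γB : ℝ) (hγA : 0 < γA) (hγB : 0 < γB) (Ψ F : Ω →ᵇ ℝ) :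
    dilated ρ (γA + γB) Ψ ≤ dilated ρ γA (Ψ - F) + dilated ρ γB F := by
  have hγC : 0 < γA + γB := by linarith
  set l : ℝ := γA / (γA + γB) with hl
  have hl0 : 0 ≤ l := by positivity
  have hl1 : l ≤ 1 := by
    rw [hl, div_le_one hγC]; linarith
  have key := hρ.1 (γA⁻¹ • (Ψ - F)) (γB⁻¹ • F) l hl0 hl1
  have h1l : 1 - l = γB / (γA + γB) := by
    rw [hl]; field_simp; ring
  have heq : l • (γA⁻¹ • (Ψ - F)) + (1 - l) • (γB⁻¹ • F) = (γA + γB)⁻¹ • Ψ := by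
    ext ω
    simp only [BoundedContinuousFunction.coe_add, BoundedContinuousFunction.coe_smul,
      BoundedContinuousFunction.coe_sub, Pi.add_apply, Pi.smul_apply, Pi.sub_apply,
      smul_eq_mul, hl, h1l]
    field_simp
    ring
  rw [heq] at key
  have := mul_le_mul_of_nonneg_left key hγC.le
  calc dilated ρ (γA + γB) Ψ = (γA + γB) * ρ ((γA + γB)⁻¹ • Ψ) := rfl
    _ ≤ (γA + γB) * (l * ρ (γA⁻¹ • (Ψ - F)) + (1 - l) * ρ (γB⁻¹ • F)) := this
    _ = dilated ρ γA (Ψ - F) + dilated ρ γB F := by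
        unfold dilated
        rw [hl, h1l]
        field_simp

theorem stmt15 {Ω : Type*} [TopologicalSpace Ω] [DiscreteTopology Ω] [Nonempty Ω]
    (ρ : (Ω →ᵇ ℝ) → ℝ) (hρ : IsConvexRiskMeasure ρ)
    (γA γB : ℝ) (hγA : 0 < γA) (hγB : 0 < γB) (Ψ : Ω →ᵇ ℝ) :
    (⨅ F : Ω →ᵇ ℝ, (dilated ρ γA (Ψ - F) + dilated ρ γB F))
        = dilated ρ (γA + γB) Ψ ∧
    dilated ρ (γA + γB) Ψ
        = dilated ρ γA (Ψ - (γB / (γA + γB)) • Ψ)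
          + dilated ρ γB ((γB / (γA + γB)) • Ψ) := by
  have hγC : 0 < γA + γB := by linarith
  have hexact : dilated ρ (γA + γB) Ψ
      = dilated ρ γA (Ψ - (γB / (γA + γB)) • Ψ)
        + dilated ρ γB ((γB / (γA + γB)) • Ψ) := by
    have h1 : γA⁻¹ • (Ψ - (γB / (γA + γB)) • Ψ) = (γA + γB)⁻¹ • Ψ := by
      ext ω
      simp only [BoundedContinuousFunction.coe_smul, BoundedContinuousFunction.coe_sub,
        Pi.smul_apply, Pi.sub_apply, smul_eq_mul]
      field_simp
      ring
    have h2 : γB⁻¹ • ((γB / (γA + γB)) • Ψ) = (γA + γB)⁻¹ • Ψ := by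
      ext ω
      simp only [BoundedContinuousFunction.coe_smul, Pi.smul_apply, smul_eq_mul]
      field_simp
    unfold dilated
    rw [h1, h2]
    ring
  refine ⟨le_antisymm ?_ ?_, hexact⟩
  · have : dilated ρ γA (Ψ - (γB / (γA + γB)) • Ψ) + dilated ρ γB ((γB / (γA + γB)) • Ψ)
        = dilated ρ (γA + γB) Ψ := hexact.symm
    calc (⨅ F : Ω →ᵇ ℝ, (dilated ρ γA (Ψ - F) + dilated ρ γB F))
        ≤ dilated ρ γA (Ψ - (γB / (γA + γB)) • Ψ) + dilated ρ γB ((γB / (γA + γB)) • Ψ) :=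
          ciInf_le ⟨dilated ρ (γA + γB) Ψ, fun x ⟨F, hF⟩ => hF ▸ dilated_lb ρ hρ γA γB hγA hγB Ψ F⟩ _
      _ = dilated ρ (γA + γB) Ψ := this
  · exact le_ciInf fun F => dilated_lb ρ hρ γA γB hγA hγB Ψ F
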